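/- Let T be a finite rooted tree with vertex set V, root ρ, arc set A. For j = 1,...,k let π^(j) be a distribution on {0,1} and P^(j)(r,s) a 2×2 matrix with non-negative entries and det P^(j)(r,s) ≥ 0 for each arc. Define for U : V → {0,1}^k, P(U) = ∏_j [ π^(j)(U_j(ρ)) · ∏_{(r,s)∈A} P^(j)(r,s)(U_j(r), U_j(s)) ]. Then P(Y)·P(Z) ≤ P(Y∨Z)·P(Y∧Z) for all Y, Z : V → {0,1}^k, with join and meet taken coordinatewise. -/

import Mathlib

/-- The probability of a full state assignment `U : V → {0,1}^k` under the multivariate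
Markov process built from `k` independent two-state Markov processes on a rooted tree. -/
noncomputable def multiProb {V : Type} [Fintype V] (ρ : V) (A : Finset (V × V)) (k : ℕ)
    (π : Fin k → Fin 2 → ℝ) (P : Fin k → V → V → Matrix (Fin 2) (Fin 2) ℝ)
    (U : V → Fin k → Fin 2) : ℝ :=
  ∏ j, (π j (U ρ j) * ∏ a ∈ A, P j a.1 a.2 (U a.1 j) (U a.2 j))


lemma key_ineq (M : Matrix (Fin 2) (Fin 2) ℝ) (h0 : ∀ i l, 0 ≤ M i l)
    (hd : 0 ≤ M.det) (a b c d : Fin 2) :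
    M a b * M c d ≤ M (max a c) (max b d) * M (min a c) (min b d) := by
  rw [Matrix.det_fin_two] at hd
  fin_cases a <;> fin_cases b <;> fin_cases c <;> fin_cases d <;>
    simp_all <;> nlinarith [h0.1.1, h0.1.2, h0.2.1, h0.2.2]

lemma pi_maxmin (f : Fin 2 → ℝ) (y z : Fin 2) :
    f (max y z) * f (min y z) = f y * f z := by
  rcases le_total y z with h | h <;>
    simp [max_eq_right, max_eq_left, min_eq_left, min_eq_right, h, mul_comm]

theorem stmt_6 {V : Type} [Fintype V] (ρ : V) (A : Finset (V × V))
    (hroot : ∀ a ∈ A, a.2 ≠ ρ)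
    (hparent : ∀ v : V, v ≠ ρ → ∃! r : V, (r, v) ∈ A)
    (k : ℕ) (π : Fin k → Fin 2 → ℝ)
    (hπ : ∀ j i, 0 ≤ π j i) (hπ1 : ∀ j, π j 0 + π j 1 = 1)
    (P : Fin k → V → V → Matrix (Fin 2) (Fin 2) ℝ)
    (hP : ∀ j, ∀ a ∈ A, ∀ i l, 0 ≤ P j a.1 a.2 i l)
    (hProw : ∀ j, ∀ a ∈ A, ∀ i : Fin 2, P j a.1 a.2 i 0 + P j a.1 a.2 i 1 = 1)
    (hPdet : ∀ j, ∀ a ∈ A, 0 ≤ (P j a.1 a.2).det)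
    (Y Z : V → Fin k → Fin 2) :
    multiProb ρ A k π P Y * multiProb ρ A k π P Z ≤
      multiProb ρ A k π P (fun v j => max (Y v j) (Z v j)) *
        multiProb ρ A k π P (fun v j => min (Y v j) (Z v j)) := by
  simp only [multiProb]
  rw [← Finset.prod_mul_distrib, ← Finset.prod_mul_distrib]
  apply Finset.prod_le_prod
  · intro j _
    exact mul_nonneg (mul_nonneg (hπ j _) (Finset.prod_nonneg fun a ha => hP j a ha _ _))
      (mul_nonneg (hπ j _) (Finset.prod_nonneg fun a ha => hP j a ha _ _))
  · intro j _
    rw [mul_mul_mul_comm (π j (Y ρ j)), mul_mul_mul_comm (π j (Y ρ j ⊔ Z ρ j)),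
      ← Finset.prod_mul_distrib, ← Finset.prod_mul_distrib, pi_maxmin]
    apply mul_le_mul_of_nonneg_left _ (mul_nonneg (hπ j _) (hπ j _))
    apply Finset.prod_le_prod
    · intro a ha
      exact mul_nonneg (hP j a ha _ _) (hP j a ha _ _)
    · intro a ha
      exact key_ineq _ (hP j a ha) (hPdet j a ha) _ _ _ _
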